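/- Let E ⊆ ℝⁿ be a starry set. Then E is star-shaped with respect to the origin: for every a ∈ E the segment [0, a] = {λ·a : λ ∈ [0,1]} is contained in E. -/
import Mathlib


/-- A set `E ⊆ ℝⁿ` is *starry* if it is closed, `0` belongs to its interior, and for
every `x ≠ 0`, either the ray `L_x = {λ • x : λ ≥ 0}` is contained in `E`, or there is a
unique point of `L_x` lying in the frontier of `E`. -/
def Starry {n : ℕ} (E : Set (EuclideanSpace ℝ (Fin n))) : Prop :=
  IsClosed E ∧ (0 : EuclideanSpace ℝ (Fin n)) ∈ interior E ∧
    ∀ x : EuclideanSpace ℝ (Fin n), x ≠ 0 →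
      ({u | ∃ l : ℝ, 0 ≤ l ∧ u = l • x} ⊆ E) ∨
      (∃! z : EuclideanSpace ℝ (Fin n),
        z ∈ {u | ∃ l : ℝ, 0 ≤ l ∧ u = l • x} ∧ z ∈ frontier E)

theorem stmt_1 {n : ℕ} (E : Set (EuclideanSpace ℝ (Fin n))) (hE : Starry E) :
    ∀ a ∈ E, ∀ l : ℝ, l ∈ Set.Icc (0 : ℝ) 1 → l • a ∈ E := by
  obtain ⟨hcl, h0, hray⟩ := hE
  have h0E : (0 : EuclideanSpace ℝ (Fin n)) ∈ E := interior_subset h0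
  intro a ha l hl
  by_cases ha0 : a = 0
  · simpa [ha0] using h0E
  by_contra hla
  obtain ⟨hl0, hl1⟩ := hl
  have hfc : Continuous (fun t : ℝ => t • a) := by continuity
  rcases hray a ha0 with hsub | ⟨z, ⟨⟨lz, hlz, hz⟩, hzf⟩, huniq⟩
  · exact hla (hsub ⟨l, hl0, rfl⟩)
  -- set of parameters below l where t•a ∈ E
  set A : Set ℝ := {t | t ∈ Set.Icc 0 l ∧ t • a ∈ E} with hA
  have hAc : IsCompact A := (isCompact_Icc.inter_right (hcl.preimage hfc))
  have hAne : A.Nonempty := ⟨0, ⟨le_refl 0, hl0⟩, by simpa using h0E⟩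
  obtain ⟨s, hsA, hs_ub⟩ := hAc.exists_isGreatest hAne
  obtain ⟨⟨hs0, hsl⟩, hsE⟩ := hsA
  have hs_lt : s < l := lt_of_le_of_ne hsl (by rintro rfl; exact hla hsE)
  -- set of parameters above l where t•a ∈ E
  set B : Set ℝ := {t | t ∈ Set.Icc l 1 ∧ t • a ∈ E} with hB
  have hBc : IsCompact B := (isCompact_Icc.inter_right (hcl.preimage hfc))
  have hBne : B.Nonempty := ⟨1, ⟨hl1, le_refl 1⟩, by simpa using ha⟩
  obtain ⟨t, htB, ht_lb⟩ := hBc.exists_isLeast hBne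
  obtain ⟨⟨htl, ht1⟩, htE⟩ := htB
  have ht_gt : l < t := lt_of_le_of_ne htl (by rintro rfl; exact hla htE)
  -- s•a is a frontier point
  have hsf : s • a ∈ frontier E := by
    rw [frontier_eq_closure_inter_closure]
    refine ⟨subset_closure hsE, ?_⟩
    have h1 : s ∈ closure (Set.Ioc s l) := by
      rw [closure_Ioc hs_lt.ne]; exact ⟨le_refl s, hsl⟩
    refine map_mem_closure (f := fun t : ℝ => t • a) hfc h1 ?_
    intro u hu hc
    exact absurd (hs_ub ⟨⟨le_trans hs0 hu.1.le, hu.2⟩, hc⟩) (not_le.2 hu.1)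
  -- t•a is a frontier point
  have htf : t • a ∈ frontier E := by
    rw [frontier_eq_closure_inter_closure]
    refine ⟨subset_closure htE, ?_⟩
    have h1 : t ∈ closure (Set.Ico l t) := by
      rw [closure_Ico ht_gt.ne]; exact ⟨ht_gt.le, le_refl t⟩
    refine map_mem_closure (f := fun t : ℝ => t • a) hfc h1 ?_
    intro u hu hc
    exact absurd (ht_lb ⟨⟨hu.1, le_trans hu.2.le ht1⟩, hc⟩) (not_le.2 hu.2)
  have e1 : s • a = z := huniq _ ⟨⟨s, hs0, rfl⟩, hsf⟩
  have e2 : t • a = z := huniq _ ⟨⟨t, le_trans hl0 htl, rfl⟩, htf⟩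
  have : (s - t) • a = 0 := by rw [sub_smul, e1, e2, sub_self]
  rcases smul_eq_zero.1 this with h | h
  · exact absurd (sub_eq_zero.1 h) (ne_of_lt (hs_lt.trans ht_gt))
  · exact ha0 h
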